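/- arXiv:1901.01779 — 3 statements merged into one kernel-verified Lean document; each statement's English description precedes it below -/
import Mathlib

section
/- The annihilator of R = R_n(K,J) equals Ann_K(J)·e_{n,1}, i.e., {α ∈ R : αR = Rα = 0} = {a e_{n,1} : a ∈ K, aJ = Ja = 0}. -/
/-- Membership in `R = R_n(K,J)`: entries on and above the main diagonal lie in `J`. -/
def Rmem {K : Type*} [Ring K] {n : ℕ} (J : AddSubgroup K)
    (M : Matrix (Fin n) (Fin n) K) : Prop :=
  ∀ i j : Fin n, i ≤ j → M i j ∈ J

/-- The annihilator of `R = R_n(K,J)` equals `Ann_K(J) · e_{n,1}`. -/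
theorem annihilator_of_R {K : Type*} [Ring K] {n : ℕ} (hn : 3 ≤ n)
    (J : AddSubgroup K)
    (hJl : ∀ r : K, ∀ y ∈ J, r * y ∈ J) (hJr : ∀ r : K, ∀ y ∈ J, y * r ∈ J) :
    ∀ M : Matrix (Fin n) (Fin n) K,
      (Rmem J M ∧ ∀ X : Matrix (Fin n) (Fin n) K, Rmem J X → M * X = 0 ∧ X * M = 0) ↔
      ∃ a : K, (∀ y ∈ J, a * y = 0 ∧ y * a = 0) ∧
        M = Matrix.single ⟨n - 1, by omega⟩ ⟨0, by omega⟩ a := by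
  intro M
  set p : Fin n := ⟨n - 1, by omega⟩ with hp
  set z : Fin n := ⟨0, by omega⟩ with hz
  constructor
  · rintro ⟨hM, hann⟩
    -- test matrices: stdBasisMatrix i j c with i > j is in R
    have hRmemStd : ∀ (i j : Fin n) (c : K), (j : ℕ) < (i : ℕ) →
        Rmem J (Matrix.single i j c) := by
      intro i j c hij q r hqr
      rcases eq_or_ne i q with rfl | hne
      · rcases eq_or_ne j r with rfl | hne'
        · exact absurd hqr (by rw [Fin.le_def]; omega)
        · rw [Matrix.single_apply_of_ne _ _ _ _ _ (by tauto)]; exact J.zero_mem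
      · rw [Matrix.single_apply_of_ne _ _ _ _ _ (by tauto)]; exact J.zero_mem
    have hRmemJ : ∀ (i j : Fin n) (c : K), c ∈ J → Rmem J (Matrix.single i j c) := by
      intro i j c hc q r hqr
      rcases eq_or_ne i q with rfl | hne
      · rcases eq_or_ne j r with rfl | hne'
        · simpa using hc
        · rw [Matrix.single_apply_of_ne _ _ _ _ _ (by tauto)]; exact J.zero_mem
      · rw [Matrix.single_apply_of_ne _ _ _ _ _ (by tauto)]; exact J.zero_mem
    -- columns other than 0 vanish
    have h1 : ∀ (i k : Fin n), (0 : ℕ) < (k : ℕ) → M i k = 0 := by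
      intro i k hk
      have hX := (hann _ (hRmemStd k z 1 (by exact hk))).1
      have := congrFun (congrFun hX i) z
      simpa using this
    -- rows other than n-1 vanish
    have h2 : ∀ (l j : Fin n), (l : ℕ) < n - 1 → M l j = 0 := by
      intro l j hl
      set l' : Fin n := ⟨(l : ℕ) + 1, by omega⟩ with hl'
      have hX := (hann _ (hRmemStd l' l 1 (by rw [hl']; exact Nat.lt_succ_self _))).2
      have := congrFun (congrFun hX l') j
      simpa using this
    refine ⟨M p z, ?_, ?_⟩
    · intro y hy
      constructor
      · have hX := (hann _ (hRmemJ z z y hy)).1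
        have := congrFun (congrFun hX p) z
        simpa using this
      · have hX := (hann _ (hRmemJ p p y hy)).2
        have := congrFun (congrFun hX p) z
        simpa using this
    · ext i j
      rcases eq_or_ne p i with rfl | hi
      · rcases eq_or_ne z j with rfl | hj
        · simp
        · rw [Matrix.single_apply_of_ne _ _ _ _ _ (by tauto)]
          exact h1 p j (by rcases j with ⟨j, hjn⟩; simp [hz, Fin.ext_iff] at hj ⊢; omega)
      · rw [Matrix.single_apply_of_ne _ _ _ _ _ (by tauto)]
        exact h2 i j (by rcases i with ⟨i, hin⟩; simp [hp, Fin.ext_iff] at hi ⊢; omega)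
  · rintro ⟨a, ha, rfl⟩
    constructor
    · intro i j hij
      rcases eq_or_ne p i with rfl | hi
      · rcases eq_or_ne z j with rfl | hj
        · exact absurd hij (by simp [Fin.le_def, hp, hz]; omega)
        · rw [Matrix.single_apply_of_ne _ _ _ _ _ (by tauto)]; exact J.zero_mem
      · rw [Matrix.single_apply_of_ne _ _ _ _ _ (by tauto)]; exact J.zero_mem
    · intro X hX
      constructor
      · ext i j
        rcases eq_or_ne i p with rfl | hi
        · rw [Matrix.single_mul_apply_same]
          simpa using (ha (X z j) (hX z j (by simp [Fin.le_def, hz]))).1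
        · simp [Matrix.single_mul_apply_of_ne _ _ _ _ _ hi]
      · ext i j
        rcases eq_or_ne j z with rfl | hj
        · rw [Matrix.mul_single_apply_same]
          simpa using (ha (X i p) (hX i p (by simp [Fin.le_def, hp]; omega))).2
        · simp [Matrix.mul_single_apply_of_ne _ _ _ _ _ hj]
end

section
/- Let α, β, γ : J → Ann_K(J) be additive maps satisfying α(J²) = β(J²) = γ(J²) = 0, α(yx) = xα(y), β(yx) = xβ(y), β(xy) = β(y)x, and γ(xy) = γ(y)x for all x ∈ K, y ∈ J. Then the map Γ̄ : R → R sending a matrix [a_{i,j}] to α(a_{1,n})e_{n−1,1} + β(a_{1,n})e_{n−1,2} + γ(a_{1,n})e_{n,2} − α(a_{1,n−1})e_{n,1} − β(a_{1,n−1})e_{n,2} − β(a_{2,n})e_{n−1,1} − γ(a_{2,n})e_{n,1} + β(a_{2,n−1})e_{n,1} is a Lie derivation of R. -/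
/-- A Lie derivation of `R = R_n(K,J)`. -/
def IsLieDerOn {K : Type*} [Ring K] {n : ℕ} (J : AddSubgroup K)
    (D : Matrix (Fin n) (Fin n) K → Matrix (Fin n) (Fin n) K) : Prop :=
  (∀ A, Rmem J A → Rmem J (D A)) ∧
  (∀ A B, Rmem J A → Rmem J B → D (A + B) = D A + D B) ∧
  (∀ A B, Rmem J A → Rmem J B →
    D (A * B - B * A) = (D A * B - B * D A) + (A * D B - D B * A))

lemma fin4_0 {n : ℕ} (hn : 4 ≤ n) : 0 < n := by omega

lemma fin4_1 {n : ℕ} (hn : 4 ≤ n) : 1 < n := by omega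

lemma fin4_2 {n : ℕ} (hn : 4 ≤ n) : n - 2 < n := by omega

lemma fin4_3 {n : ℕ} (hn : 4 ≤ n) : n - 1 < n := by omega

open Matrix in
lemma stdBasis_mul_eqJ {K : Type*} [Ring K] {n : ℕ} (J : AddSubgroup K)
    (B : Matrix (Fin n) (Fin n) K) (i j j' : Fin n) (c : K)
    (hc : ∀ z ∈ J, c * z = 0)
    (hB : ∀ b : Fin n, b ≠ j' → B j b ∈ J) :
    Matrix.single i j c * B = Matrix.single i j' (c * B j j') := by
  ext a b
  by_cases ha : a = i
  · subst ha
    rw [Matrix.single_mul_apply_same]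
    by_cases hb : b = j'
    · subst hb; simp [Matrix.single]
    · rw [hc _ (hB b hb)]
      simp [Matrix.single, Ne.symm hb]
  · rw [Matrix.single_mul_apply_of_ne _ _ _ _ _ ha]
    simp [Matrix.single, Ne.symm ha]

open Matrix in
lemma stdBasis_mul_zeroJ {K : Type*} [Ring K] {n : ℕ} (J : AddSubgroup K)
    (B : Matrix (Fin n) (Fin n) K) (i j : Fin n) (c : K)
    (hc : ∀ z ∈ J, c * z = 0)
    (hB : ∀ b : Fin n, B j b ∈ J) :
    Matrix.single i j c * B = 0 := by
  rw [stdBasis_mul_eqJ J B i j j c hc (fun b _ => hB b), hc _ (hB j),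
    Matrix.single_zero]

open Matrix in
lemma mul_stdBasis_eqJ {K : Type*} [Ring K] {n : ℕ} (J : AddSubgroup K)
    (B : Matrix (Fin n) (Fin n) K) (i i' j : Fin n) (c : K)
    (hc : ∀ z ∈ J, z * c = 0)
    (hB : ∀ a : Fin n, a ≠ i' → B a i ∈ J) :
    B * Matrix.single i j c = Matrix.single i' j (B i' i * c) := by
  ext a b
  by_cases hb : b = j
  · subst hb
    rw [Matrix.mul_single_apply_same]
    by_cases ha : a = i'
    · subst ha; simp [Matrix.single]
    · rw [hc _ (hB a ha)]
      simp [Matrix.single, Ne.symm ha]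
  · rw [Matrix.mul_single_apply_of_ne _ _ _ _ _ hb]
    simp [Matrix.single, Ne.symm hb]

open Matrix in
lemma mul_stdBasis_zeroJ {K : Type*} [Ring K] {n : ℕ} (J : AddSubgroup K)
    (B : Matrix (Fin n) (Fin n) K) (i j : Fin n) (c : K)
    (hc : ∀ z ∈ J, z * c = 0)
    (hB : ∀ a : Fin n, B a i ∈ J) :
    B * Matrix.single i j c = 0 := by
  rw [mul_stdBasis_eqJ J B i i j c hc (fun a _ => hB a), hc _ (hB i),
    Matrix.single_zero]

lemma phi_comm_entry {K : Type*} [Ring K] {n : ℕ} (J : AddSubgroup K)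
    (φ : K →+ K) (A B : Matrix (Fin n) (Fin n) K) (i j k1 k2 : Fin n)
    (hφ2 : ∀ y ∈ J, ∀ z ∈ J, φ (y * z) = 0)
    (hk : k1 ≠ k2)
    (h : ∀ k : Fin n, k ≠ k1 → k ≠ k2 →
      A i k ∈ J ∧ B k j ∈ J ∧ B i k ∈ J ∧ A k j ∈ J) :
    φ ((A * B - B * A) i j) =
      (φ (A i k1 * B k1 j) - φ (B i k1 * A k1 j)) +
      (φ (A i k2 * B k2 j) - φ (B i k2 * A k2 j)) := by
  have hC : (A * B - B * A) i j = ∑ k : Fin n, (A i k * B k j - B i k * A k j) := by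
    simp [Matrix.sub_apply, Matrix.mul_apply, Finset.sum_sub_distrib]
  rw [hC, map_sum]
  have hzero : ∀ k ∈ (Finset.univ : Finset (Fin n)), k ∉ ({k1, k2} : Finset (Fin n)) →
      φ (A i k * B k j - B i k * A k j) = 0 := by
    intro k _ hk'
    simp only [Finset.mem_insert, Finset.mem_singleton, not_or] at hk'
    obtain ⟨h1, h2, h3, h4⟩ := h k hk'.1 hk'.2
    rw [map_sub, hφ2 _ h1 _ h2, hφ2 _ h3 _ h4, sub_zero]
  rw [← Finset.sum_subset (Finset.subset_univ ({k1, k2} : Finset (Fin n))) hzero,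
    Finset.sum_pair hk]
  simp [map_sub]

open Matrix in
lemma lieder_mul_left {K : Type*} [Ring K] {n : ℕ} (hn : 4 ≤ n) (J : AddSubgroup K)
    (M : Matrix (Fin n) (Fin n) K) (hM : Rmem J M) (x1 x2 x3 x4 x5 x6 x7 x8 : K)
    (h1 : ∀ z ∈ J, x1 * z = 0) (h2 : ∀ z ∈ J, x2 * z = 0) (h3 : ∀ z ∈ J, x3 * z = 0)
    (h4 : ∀ z ∈ J, x4 * z = 0) (h5 : ∀ z ∈ J, x5 * z = 0) (h6 : ∀ z ∈ J, x6 * z = 0)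
    (h7 : ∀ z ∈ J, x7 * z = 0) (h8 : ∀ z ∈ J, x8 * z = 0) :
    (single (⟨n - 2, fin4_2 hn⟩ : Fin n) ⟨0, fin4_0 hn⟩ x1 +
     single ⟨n - 2, fin4_2 hn⟩ ⟨1, fin4_1 hn⟩ x2 +
     single ⟨n - 1, fin4_3 hn⟩ ⟨1, fin4_1 hn⟩ x3 -
     single ⟨n - 1, fin4_3 hn⟩ ⟨0, fin4_0 hn⟩ x4 -
     single ⟨n - 1, fin4_3 hn⟩ ⟨1, fin4_1 hn⟩ x5 -
     single ⟨n - 2, fin4_2 hn⟩ ⟨0, fin4_0 hn⟩ x6 -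
     single ⟨n - 1, fin4_3 hn⟩ ⟨0, fin4_0 hn⟩ x7 +
     single ⟨n - 1, fin4_3 hn⟩ ⟨0, fin4_0 hn⟩ x8) * M =
    single ⟨n - 2, fin4_2 hn⟩ ⟨0, fin4_0 hn⟩ (x2 * M ⟨1, fin4_1 hn⟩ ⟨0, fin4_0 hn⟩) +
    single ⟨n - 1, fin4_3 hn⟩ ⟨0, fin4_0 hn⟩ (x3 * M ⟨1, fin4_1 hn⟩ ⟨0, fin4_0 hn⟩) -
    single ⟨n - 1, fin4_3 hn⟩ ⟨0, fin4_0 hn⟩ (x5 * M ⟨1, fin4_1 hn⟩ ⟨0, fin4_0 hn⟩) := by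
  have z0 : ∀ (i : Fin n) (c : K), (∀ z ∈ J, c * z = 0) →
      single i (⟨0, by omega⟩ : Fin n) c * M = 0 := fun i c hc =>
    stdBasis_mul_zeroJ J M i _ c hc (fun b => hM _ b (Nat.zero_le _))
  have z1 : ∀ (i : Fin n) (c : K), (∀ z ∈ J, c * z = 0) →
      single i (⟨1, by omega⟩ : Fin n) c * M =
        single i ⟨0, by omega⟩ (c * M ⟨1, by omega⟩ ⟨0, by omega⟩) := by
    intro i c hc
    refine stdBasis_mul_eqJ J M i _ _ c hc (fun b hb => hM _ b ?_)
    have hb' : (b : ℕ) ≠ 0 := fun h => hb (Fin.ext (by simpa using h))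
    rw [Fin.le_def]
    simpa using by omega
  simp only [add_mul, sub_mul]
  rw [z0 _ x1 h1, z1 _ x2 h2, z1 _ x3 h3, z0 _ x4 h4, z1 _ x5 h5, z0 _ x6 h6,
    z0 _ x7 h7, z0 _ x8 h8]
  abel

open Matrix in
lemma lieder_mul_right {K : Type*} [Ring K] {n : ℕ} (hn : 4 ≤ n) (J : AddSubgroup K)
    (M : Matrix (Fin n) (Fin n) K) (hM : Rmem J M) (x1 x2 x3 x4 x5 x6 x7 x8 : K)
    (h1 : ∀ z ∈ J, z * x1 = 0) (h2 : ∀ z ∈ J, z * x2 = 0) (h3 : ∀ z ∈ J, z * x3 = 0)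
    (h4 : ∀ z ∈ J, z * x4 = 0) (h5 : ∀ z ∈ J, z * x5 = 0) (h6 : ∀ z ∈ J, z * x6 = 0)
    (h7 : ∀ z ∈ J, z * x7 = 0) (h8 : ∀ z ∈ J, z * x8 = 0) :
    M * (single (⟨n - 2, fin4_2 hn⟩ : Fin n) (⟨0, fin4_0 hn⟩ : Fin n) x1 +
     single (⟨n - 2, fin4_2 hn⟩ : Fin n) (⟨1, fin4_1 hn⟩ : Fin n) x2 +
     single (⟨n - 1, fin4_3 hn⟩ : Fin n) (⟨1, fin4_1 hn⟩ : Fin n) x3 -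
     single (⟨n - 1, fin4_3 hn⟩ : Fin n) (⟨0, fin4_0 hn⟩ : Fin n) x4 -
     single (⟨n - 1, fin4_3 hn⟩ : Fin n) (⟨1, fin4_1 hn⟩ : Fin n) x5 -
     single (⟨n - 2, fin4_2 hn⟩ : Fin n) (⟨0, fin4_0 hn⟩ : Fin n) x6 -
     single (⟨n - 1, fin4_3 hn⟩ : Fin n) (⟨0, fin4_0 hn⟩ : Fin n) x7 +
     single (⟨n - 1, fin4_3 hn⟩ : Fin n) (⟨0, fin4_0 hn⟩ : Fin n) x8) =
    single (⟨n - 1, fin4_3 hn⟩ : Fin n) (⟨0, fin4_0 hn⟩ : Fin n)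
      (M (⟨n - 1, fin4_3 hn⟩ : Fin n) (⟨n - 2, fin4_2 hn⟩ : Fin n) * x1) +
    single (⟨n - 1, fin4_3 hn⟩ : Fin n) (⟨1, fin4_1 hn⟩ : Fin n)
      (M (⟨n - 1, fin4_3 hn⟩ : Fin n) (⟨n - 2, fin4_2 hn⟩ : Fin n) * x2) -
    single (⟨n - 1, fin4_3 hn⟩ : Fin n) (⟨0, fin4_0 hn⟩ : Fin n)
      (M (⟨n - 1, fin4_3 hn⟩ : Fin n) (⟨n - 2, fin4_2 hn⟩ : Fin n) * x6) := by
  have z0 : ∀ (j : Fin n) (c : K), (∀ z ∈ J, z * c = 0) →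
      M * single (⟨n - 1, by omega⟩ : Fin n) j c = 0 := fun j c hc =>
    mul_stdBasis_zeroJ J M _ j c hc (fun a => hM a _ (by rw [Fin.le_def]; simpa using by omega))
  have z1 : ∀ (j : Fin n) (c : K), (∀ z ∈ J, z * c = 0) →
      M * single (⟨n - 2, by omega⟩ : Fin n) j c =
        single ⟨n - 1, by omega⟩ j (M ⟨n - 1, by omega⟩ ⟨n - 2, by omega⟩ * c) := by
    intro j c hc
    refine mul_stdBasis_eqJ J M _ _ j c hc (fun a ha => hM a _ ?_)
    have ha' : (a : ℕ) ≠ n - 1 := fun h => ha (Fin.ext (by simpa using h))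
    have := a.isLt
    rw [Fin.le_def]
    simpa using by omega
  simp only [mul_add, mul_sub]
  rw [z1 _ x1 h1, z1 _ x2 h2, z0 _ x3 h3, z0 _ x4 h4, z0 _ x5 h5, z1 _ x6 h6,
    z0 _ x7 h7, z0 _ x8 h8]
  abel

/-- The special map of type II is a Lie derivation of `R` (`n ≥ 4`). -/
theorem special_lie_derivation_type_II {K : Type*} [Ring K] {n : ℕ} (hn : 4 ≤ n)
    (h2 : ∀ a : K, a + a = 0 → a = 0)
    (J : AddSubgroup K)
    (hJl : ∀ r : K, ∀ y ∈ J, r * y ∈ J) (hJr : ∀ r : K, ∀ y ∈ J, y * r ∈ J)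
    (α β γ : K →+ K)
    (hαA : ∀ y ∈ J, ∀ z ∈ J, α y * z = 0 ∧ z * α y = 0)
    (hβA : ∀ y ∈ J, ∀ z ∈ J, β y * z = 0 ∧ z * β y = 0)
    (hγA : ∀ y ∈ J, ∀ z ∈ J, γ y * z = 0 ∧ z * γ y = 0)
    (hα2 : ∀ y ∈ J, ∀ z ∈ J, α (y * z) = 0)
    (hβ2 : ∀ y ∈ J, ∀ z ∈ J, β (y * z) = 0)
    (hγ2 : ∀ y ∈ J, ∀ z ∈ J, γ (y * z) = 0)
    (hα : ∀ x : K, ∀ y ∈ J, α (y * x) = x * α y)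
    (hβl : ∀ x : K, ∀ y ∈ J, β (y * x) = x * β y)
    (hβr : ∀ x : K, ∀ y ∈ J, β (x * y) = β y * x)
    (hγ : ∀ x : K, ∀ y ∈ J, γ (x * y) = γ y * x) :
    IsLieDerOn J (fun M : Matrix (Fin n) (Fin n) K =>
      Matrix.single ⟨n - 2, by omega⟩ ⟨0, by omega⟩ (α (M ⟨0, by omega⟩ ⟨n - 1, by omega⟩)) +
      Matrix.single ⟨n - 2, by omega⟩ ⟨1, by omega⟩ (β (M ⟨0, by omega⟩ ⟨n - 1, by omega⟩)) +
      Matrix.single ⟨n - 1, by omega⟩ ⟨1, by omega⟩ (γ (M ⟨0, by omega⟩ ⟨n - 1, by omega⟩)) -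
      Matrix.single ⟨n - 1, by omega⟩ ⟨0, by omega⟩ (α (M ⟨0, by omega⟩ ⟨n - 2, by omega⟩)) -
      Matrix.single ⟨n - 1, by omega⟩ ⟨1, by omega⟩ (β (M ⟨0, by omega⟩ ⟨n - 2, by omega⟩)) -
      Matrix.single ⟨n - 2, by omega⟩ ⟨0, by omega⟩ (β (M ⟨1, by omega⟩ ⟨n - 1, by omega⟩)) -
      Matrix.single ⟨n - 1, by omega⟩ ⟨0, by omega⟩ (γ (M ⟨1, by omega⟩ ⟨n - 1, by omega⟩)) +
      Matrix.single ⟨n - 1, by omega⟩ ⟨0, by omega⟩ (β (M ⟨1, by omega⟩ ⟨n - 2, by omega⟩))) := by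
  refine ⟨?_, ?_, ?_⟩
  · intro A hA i j hij
    have hij' : (i : ℕ) ≤ (j : ℕ) := hij
    simp only [Matrix.add_apply, Matrix.sub_apply, Matrix.single, Matrix.of_apply,
      Fin.ext_iff]
    split_ifs <;> first | omega | simpa using J.zero_mem
  · intro A B hA hB
    simp only [Matrix.add_apply, map_add, Matrix.single_add]
    abel
  · intro A B hA hB
    beta_reduce
    have f0 : 0 < n := by omega
    have f1 : 1 < n := by omega
    have f2 : n - 2 < n := by omega
    have f3 : n - 1 < n := by omega
    have ha  : A ⟨0,f0⟩ ⟨n-1,f3⟩ ∈ J := hA _ _ (show (0:ℕ) ≤ n-1 by omega)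
    have ha' : B ⟨0,f0⟩ ⟨n-1,f3⟩ ∈ J := hB _ _ (show (0:ℕ) ≤ n-1 by omega)
    have hb  : A ⟨0,f0⟩ ⟨n-2,f2⟩ ∈ J := hA _ _ (show (0:ℕ) ≤ n-2 by omega)
    have hb' : B ⟨0,f0⟩ ⟨n-2,f2⟩ ∈ J := hB _ _ (show (0:ℕ) ≤ n-2 by omega)
    have hc  : A ⟨1,f1⟩ ⟨n-1,f3⟩ ∈ J := hA _ _ (show (1:ℕ) ≤ n-1 by omega)
    have hc' : B ⟨1,f1⟩ ⟨n-1,f3⟩ ∈ J := hB _ _ (show (1:ℕ) ≤ n-1 by omega)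
    have h00  : A ⟨0,f0⟩ ⟨0,f0⟩ ∈ J := hA _ _ (le_refl _)
    have h00' : B ⟨0,f0⟩ ⟨0,f0⟩ ∈ J := hB _ _ (le_refl _)
    have h01  : A ⟨0,f0⟩ ⟨1,f1⟩ ∈ J := hA _ _ (show (0:ℕ) ≤ 1 by omega)
    have h01' : B ⟨0,f0⟩ ⟨1,f1⟩ ∈ J := hB _ _ (show (0:ℕ) ≤ 1 by omega)
    have h11  : A ⟨1,f1⟩ ⟨1,f1⟩ ∈ J := hA _ _ (le_refl _)
    have h11' : B ⟨1,f1⟩ ⟨1,f1⟩ ∈ J := hB _ _ (le_refl _)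
    have e1 : ∀ (φ : K →+ K), (∀ y ∈ J, ∀ z ∈ J, φ (y * z) = 0) →
        φ ((A * B - B * A) ⟨0,f0⟩ ⟨n-1,f3⟩) = 0 := by
      intro φ hφ
      rw [phi_comm_entry J φ A B ⟨0,f0⟩ ⟨n-1,f3⟩ ⟨0,f0⟩ ⟨1,f1⟩ hφ
        (Fin.ne_of_val_ne (show (0:ℕ) ≠ 1 by omega))
        (fun k hk0 hk1 => ⟨hA _ _ (Nat.zero_le _),
          hB _ _ (show (k:ℕ) ≤ n-1 from by have := k.isLt; omega),
          hB _ _ (Nat.zero_le _),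
          hA _ _ (show (k:ℕ) ≤ n-1 from by have := k.isLt; omega)⟩),
        hφ _ h00 _ ha', hφ _ h00' _ ha, hφ _ h01 _ hc', hφ _ h01' _ hc]
      simp
    have e2 : ∀ (φ : K →+ K), (∀ y ∈ J, ∀ z ∈ J, φ (y * z) = 0) →
        (∀ x : K, ∀ y ∈ J, φ (y * x) = x * φ y) →
        φ ((A * B - B * A) ⟨0,f0⟩ ⟨n-2,f2⟩) =
          B ⟨n-1,f3⟩ ⟨n-2,f2⟩ * φ (A ⟨0,f0⟩ ⟨n-1,f3⟩) -
          A ⟨n-1,f3⟩ ⟨n-2,f2⟩ * φ (B ⟨0,f0⟩ ⟨n-1,f3⟩) := by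
      intro φ hφ hcov
      rw [phi_comm_entry J φ A B ⟨0,f0⟩ ⟨n-2,f2⟩ ⟨0,f0⟩ ⟨n-1,f3⟩ hφ
        (Fin.ne_of_val_ne (show (0:ℕ) ≠ n-1 by omega))
        (fun k hk0 hk1 => ⟨hA _ _ (Nat.zero_le _),
          hB _ _ (show (k:ℕ) ≤ n-2 from by
            have := k.isLt; have : (k:ℕ) ≠ n-1 := fun h => hk1 (Fin.ext (by simpa using h))
            omega),
          hB _ _ (Nat.zero_le _),
          hA _ _ (show (k:ℕ) ≤ n-2 from by
            have := k.isLt; have : (k:ℕ) ≠ n-1 := fun h => hk1 (Fin.ext (by simpa using h))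
            omega)⟩),
        hφ _ h00 _ hb', hφ _ h00' _ hb,
        hcov (B ⟨n-1,f3⟩ ⟨n-2,f2⟩) _ ha, hcov (A ⟨n-1,f3⟩ ⟨n-2,f2⟩) _ ha']
      abel
    have e3 : ∀ (φ : K →+ K), (∀ y ∈ J, ∀ z ∈ J, φ (y * z) = 0) →
        (∀ x : K, ∀ y ∈ J, φ (x * y) = φ y * x) →
        φ ((A * B - B * A) ⟨1,f1⟩ ⟨n-1,f3⟩) =
          φ (B ⟨0,f0⟩ ⟨n-1,f3⟩) * A ⟨1,f1⟩ ⟨0,f0⟩ -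
          φ (A ⟨0,f0⟩ ⟨n-1,f3⟩) * B ⟨1,f1⟩ ⟨0,f0⟩ := by
      intro φ hφ hcov
      rw [phi_comm_entry J φ A B ⟨1,f1⟩ ⟨n-1,f3⟩ ⟨0,f0⟩ ⟨1,f1⟩ hφ
        (Fin.ne_of_val_ne (show (0:ℕ) ≠ 1 by omega))
        (fun k hk0 hk1 => ⟨hA _ _ (show (1:ℕ) ≤ k from by
            have : (k:ℕ) ≠ 0 := fun h => hk0 (Fin.ext (by simpa using h)); omega),
          hB _ _ (show (k:ℕ) ≤ n-1 from by have := k.isLt; omega),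
          hB _ _ (show (1:ℕ) ≤ k from by
            have : (k:ℕ) ≠ 0 := fun h => hk0 (Fin.ext (by simpa using h)); omega),
          hA _ _ (show (k:ℕ) ≤ n-1 from by have := k.isLt; omega)⟩),
        hcov (A ⟨1,f1⟩ ⟨0,f0⟩) _ ha', hcov (B ⟨1,f1⟩ ⟨0,f0⟩) _ ha,
        hφ _ h11 _ hc', hφ _ h11' _ hc]
      abel
    have e4 : β ((A * B - B * A) ⟨1,f1⟩ ⟨n-2,f2⟩) =
        (β (B ⟨0,f0⟩ ⟨n-2,f2⟩) * A ⟨1,f1⟩ ⟨0,f0⟩ -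
         β (A ⟨0,f0⟩ ⟨n-2,f2⟩) * B ⟨1,f1⟩ ⟨0,f0⟩) +
        (B ⟨n-1,f3⟩ ⟨n-2,f2⟩ * β (A ⟨1,f1⟩ ⟨n-1,f3⟩) -
         A ⟨n-1,f3⟩ ⟨n-2,f2⟩ * β (B ⟨1,f1⟩ ⟨n-1,f3⟩)) := by
      rw [phi_comm_entry J β A B ⟨1,f1⟩ ⟨n-2,f2⟩ ⟨0,f0⟩ ⟨n-1,f3⟩ hβ2
        (Fin.ne_of_val_ne (show (0:ℕ) ≠ n-1 by omega))
        (fun k hk0 hk1 => ⟨hA _ _ (show (1:ℕ) ≤ k from by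
            have : (k:ℕ) ≠ 0 := fun h => hk0 (Fin.ext (by simpa using h)); omega),
          hB _ _ (show (k:ℕ) ≤ n-2 from by
            have := k.isLt; have : (k:ℕ) ≠ n-1 := fun h => hk1 (Fin.ext (by simpa using h))
            omega),
          hB _ _ (show (1:ℕ) ≤ k from by
            have : (k:ℕ) ≠ 0 := fun h => hk0 (Fin.ext (by simpa using h)); omega),
          hA _ _ (show (k:ℕ) ≤ n-2 from by
            have := k.isLt; have : (k:ℕ) ≠ n-1 := fun h => hk1 (Fin.ext (by simpa using h))
            omega)⟩),
        hβr (A ⟨1,f1⟩ ⟨0,f0⟩) _ hb', hβr (B ⟨1,f1⟩ ⟨0,f0⟩) _ hb,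
        hβl (B ⟨n-1,f3⟩ ⟨n-2,f2⟩) _ hc, hβl (A ⟨n-1,f3⟩ ⟨n-2,f2⟩) _ hc']
    rw [lieder_mul_left hn J B hB _ _ _ _ _ _ _ _
        (fun z hz => (hαA _ ha z hz).1) (fun z hz => (hβA _ ha z hz).1)
        (fun z hz => (hγA _ ha z hz).1) (fun z hz => (hαA _ hb z hz).1)
        (fun z hz => (hβA _ hb z hz).1) (fun z hz => (hβA _ hc z hz).1)
        (fun z hz => (hγA _ hc z hz).1) (fun z hz => (hβA _ (hA _ _ (show (1:ℕ) ≤ n-2 by omega)) z hz).1),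
      lieder_mul_right hn J B hB _ _ _ _ _ _ _ _
        (fun z hz => (hαA _ ha z hz).2) (fun z hz => (hβA _ ha z hz).2)
        (fun z hz => (hγA _ ha z hz).2) (fun z hz => (hαA _ hb z hz).2)
        (fun z hz => (hβA _ hb z hz).2) (fun z hz => (hβA _ hc z hz).2)
        (fun z hz => (hγA _ hc z hz).2) (fun z hz => (hβA _ (hA _ _ (show (1:ℕ) ≤ n-2 by omega)) z hz).2),
      lieder_mul_left hn J A hA _ _ _ _ _ _ _ _
        (fun z hz => (hαA _ ha' z hz).1) (fun z hz => (hβA _ ha' z hz).1)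
        (fun z hz => (hγA _ ha' z hz).1) (fun z hz => (hαA _ hb' z hz).1)
        (fun z hz => (hβA _ hb' z hz).1) (fun z hz => (hβA _ hc' z hz).1)
        (fun z hz => (hγA _ hc' z hz).1) (fun z hz => (hβA _ (hB _ _ (show (1:ℕ) ≤ n-2 by omega)) z hz).1),
      lieder_mul_right hn J A hA _ _ _ _ _ _ _ _
        (fun z hz => (hαA _ ha' z hz).2) (fun z hz => (hβA _ ha' z hz).2)
        (fun z hz => (hγA _ ha' z hz).2) (fun z hz => (hαA _ hb' z hz).2)
        (fun z hz => (hβA _ hb' z hz).2) (fun z hz => (hβA _ hc' z hz).2)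
        (fun z hz => (hγA _ hc' z hz).2) (fun z hz => (hβA _ (hB _ _ (show (1:ℕ) ≤ n-2 by omega)) z hz).2),
      e1 α hα2, e1 β hβ2, e1 γ hγ2, e2 α hα2 hα, e2 β hβ2 hβl,
      e3 β hβ2 hβr, e3 γ hγ2 hγ, e4]
    ext a b
    simp only [Matrix.add_apply, Matrix.sub_apply, Matrix.single, Matrix.of_apply,
      Fin.ext_iff]
    split_ifs <;> first | omega | abel
end

section
/- Let α, γ : J → Ann_K(J) be additive maps satisfying α(J²) = γ(J²) = 0, α(yx) = xα(y), and γ(xy) = γ(y)x for all x ∈ K, y ∈ J. Then the map Λ : R_3(K,J) → R_3(K,J) sending [a_{i,j}] to α(a_{1,3})e_{2,1} + γ(a_{1,3})e_{3,2} − α(a_{1,2})e_{3,1} − γ(a_{2,3})e_{3,1} is a Lie derivation of R_3(K,J). -/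
set_option maxHeartbeats 1000000 in
/-- The special map of type III,
`[a_{i,j}] ↦ α(a_{1,3})e_{2,1} + γ(a_{1,3})e_{3,2} − α(a_{1,2})e_{3,1} − γ(a_{2,3})e_{3,1}`,
is a Lie derivation of `R_3(K,J)`. -/
theorem special_lie_derivation_type_III {K : Type*} [Ring K]
    (h2 : ∀ a : K, a + a = 0 → a = 0)
    (J : AddSubgroup K)
    (hJl : ∀ r : K, ∀ y ∈ J, r * y ∈ J) (hJr : ∀ r : K, ∀ y ∈ J, y * r ∈ J)
    (α γ : K →+ K)
    (hαA : ∀ y ∈ J, ∀ z ∈ J, α y * z = 0 ∧ z * α y = 0)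
    (hγA : ∀ y ∈ J, ∀ z ∈ J, γ y * z = 0 ∧ z * γ y = 0)
    (hα2 : ∀ y ∈ J, ∀ z ∈ J, α (y * z) = 0)
    (hγ2 : ∀ y ∈ J, ∀ z ∈ J, γ (y * z) = 0)
    (hα : ∀ x : K, ∀ y ∈ J, α (y * x) = x * α y)
    (hγ : ∀ x : K, ∀ y ∈ J, γ (x * y) = γ y * x) :
    IsLieDerOn J (fun M : Matrix (Fin 3) (Fin 3) K =>
      Matrix.single 1 0 (α (M 0 2)) + Matrix.single 2 1 (γ (M 0 2)) -
      Matrix.single 2 0 (α (M 0 1)) - Matrix.single 2 0 (γ (M 1 2))) := by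
  classical
  refine ⟨?_, ?_, ?_⟩
  · intro A _ i j hij
    fin_cases i <;> fin_cases j <;>
      first
      | exact absurd hij (by decide)
      | simpa [Matrix.sub_apply, Matrix.add_apply] using J.zero_mem
  · intro A B _ _
    simp only [Matrix.add_apply, map_add, Matrix.single_add]
    abel
  · intro A B hA hB
    have hA00 := hA 0 0 (by decide); have hA01 := hA 0 1 (by decide)
    have hA02 := hA 0 2 (by decide); have hA11 := hA 1 1 (by decide)
    have hA12 := hA 1 2 (by decide); have hA22 := hA 2 2 (by decide)
    have hB00 := hB 0 0 (by decide); have hB01 := hB 0 1 (by decide)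
    have hB02 := hB 0 2 (by decide); have hB11 := hB 1 1 (by decide)
    have hB12 := hB 1 2 (by decide); have hB22 := hB 2 2 (by decide)
    ext i j
    fin_cases i <;> fin_cases j <;>
      simp [Matrix.sub_apply, Matrix.add_apply, Matrix.mul_apply, Fin.sum_univ_three,
        map_add, map_sub] <;>
      simp [hαA, hγA, hα2, hγ2, hα, hγ, hA00, hA01, hA02, hA11, hA12, hA22,
        hB00, hB01, hB02, hB11, hB12, hB22, mul_sub, sub_mul, mul_add, add_mul,
        mul_neg, neg_mul, map_add, map_sub] <;>
      abel
end
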